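/- Let U be any variety of Ω-algebras, and let V and W be subvarieties of U with W idempotent, such that there exist binary terms f(x,y) and g(x,y) with V satisfying f(x,y) = x and g(x,y) = y and W satisfying f(x,y) = g(x,y). Then the relative Mal'tsev product V ∘_U W is a variety. -/

import Mathlib

structure Signature where
  symbols : Type
  arity : symbols → ℕ

structure Alg (S : Signature) where
  carrier : Type
  op : ∀ ω : S.symbols, (Fin (S.arity ω) → carrier) → carrier
  nonempty : Nonempty carrier

inductive Term (S : Signature) (X : Type) : Type
  | var : X → Term S X
  | app : ∀ ω : S.symbols, (Fin (S.arity ω) → Term S X) → Term S X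

def Term.eval {S : Signature} {X : Type} (A : Alg S) (env : X → A.carrier) :
    Term S X → A.carrier
  | .var x => env x
  | .app ω ts => A.op ω fun i => (ts i).eval A env

/-- The algebra `A` satisfies the identity `u = v`. -/
def Alg.sat {S : Signature} (A : Alg S) {X : Type} (u v : Term S X) : Prop :=
  ∀ env : X → A.carrier, u.eval A env = v.eval A env

/-- An identity: a pair of terms in the countably many variables `x₀, x₁, …`. -/
abbrev Ident (S : Signature) := Term S ℕ × Term S ℕ

/-- `A` lies in the variety axiomatized by the set of identities `E`. -/
def Alg.Models {S : Signature} (A : Alg S) (E : Set (Ident S)) : Prop :=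
  ∀ e ∈ E, A.sat e.1 e.2

/-- The identity `u = v` holds in the variety axiomatized by `E`. -/
def Conseq {S : Signature} (E : Set (Ident S)) {X : Type} (u v : Term S X) : Prop :=
  ∀ A : Alg S, A.Models E → A.sat u v

/-- `a` is an idempotent element of `A`. -/
def Alg.IsIdem {S : Signature} (A : Alg S) (a : A.carrier) : Prop :=
  ∀ ω : S.symbols, A.op ω (fun _ => a) = a

/-- `B` is (the universe of) a subalgebra of `A`. -/
def Alg.IsSubuniverse {S : Signature} (A : Alg S) (B : Set A.carrier) : Prop :=
  ∀ ω (a : Fin (S.arity ω) → A.carrier), (∀ i, a i ∈ B) → A.op ω a ∈ B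

/-- The subalgebra of `A` on a nonempty subuniverse `B`. -/
def Alg.subAlg {S : Signature} (A : Alg S) (B : Set A.carrier)
    (h : A.IsSubuniverse B) (hne : B.Nonempty) : Alg S where
  carrier := B
  op ω a := ⟨A.op ω fun i => (a i : A.carrier), h ω _ fun i => (a i).2⟩
  nonempty := hne.to_subtype

/-- A congruence of `A`: an equivalence relation compatible with all operations. -/
structure Congruence {S : Signature} (A : Alg S) where
  rel : A.carrier → A.carrier → Prop
  iseqv : Equivalence rel
  compat : ∀ ω (a b : Fin (S.arity ω) → A.carrier),
    (∀ i, rel (a i) (b i)) → rel (A.op ω a) (A.op ω b)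

def Congruence.setoid {S : Signature} {A : Alg S} (θ : Congruence A) :
    Setoid A.carrier := ⟨θ.rel, θ.iseqv⟩

/-- The quotient algebra `A/θ`. -/
noncomputable def Alg.quot {S : Signature} (A : Alg S) (θ : Congruence A) : Alg S where
  carrier := Quotient θ.setoid
  op ω q := Quotient.mk θ.setoid (A.op ω fun i => (q i).out)
  nonempty := A.nonempty.map (Quotient.mk θ.setoid)

/-- Membership in the Mal'tsev product of the varieties axiomatized by `V` and `W`:
`A` has a congruence `θ` with `A/θ` in (the variety of) `W` such that every
`θ`-class which is a subalgebra of `A` is an algebra in (the variety of) `V`. -/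
def InMaltsev {S : Signature} (V W : Set (Ident S)) (A : Alg S) : Prop :=
  ∃ θ : Congruence A, (A.quot θ).Models W ∧
    ∀ a : A.carrier, ∀ h : A.IsSubuniverse {b | θ.rel a b},
      (A.subAlg {b | θ.rel a b} h ⟨a, θ.iseqv.refl a⟩).Models V

/-- A class of algebras is a variety iff it is axiomatized by some set of identities. -/
def IsVarietyClass {S : Signature} (K : Alg S → Prop) : Prop :=
  ∃ E : Set (Ident S), ∀ A : Alg S, K A ↔ A.Models E

/-- Membership in the Mal'tsev product of `V` and `W` relative to `U`:
the algebras of `U` lying in `V ∘ W`. -/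
def InMaltsevRel {S : Signature} (U V W : Set (Ident S)) (A : Alg S) : Prop :=
  A.Models U ∧ InMaltsev V W A

section Aux

variable {S : Signature}

def Term.subst {X Y : Type} : Term S X → (X → Term S Y) → Term S Y
  | .var x, σ => σ x
  | .app ω ts, σ => .app ω fun i => (ts i).subst σ

theorem Term.eval_subst {X Y : Type} (A : Alg S) (σ : X → Term S Y) (env : Y → A.carrier) :
    ∀ t : Term S X, (t.subst σ).eval A env = t.eval A fun x => (σ x).eval A env
  | .var x => rfl
  | .app ω ts => by
    simp only [Term.subst, Term.eval]
    exact congrArg _ (funext fun i => Term.eval_subst A σ env (ts i))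

def e2 {α : Sort _} (x y : α) : Fin 2 → α := fun i => if i = 0 then x else y

def ap2 (h : Term S (Fin 2)) {Y : Type} (s t : Term S Y) : Term S Y :=
  h.subst (e2 s t)

theorem eval_ap2 (A : Alg S) (h : Term S (Fin 2)) {Y : Type} (s t : Term S Y)
    (env : Y → A.carrier) :
    (ap2 h s t).eval A env = h.eval A (e2 (s.eval A env) (t.eval A env)) := by
  rw [ap2, Term.eval_subst]
  congr 1
  funext i
  by_cases hi : i = 0 <;> simp [e2, hi]

theorem eval_sub (A : Alg S) (B : Set A.carrier) (h : A.IsSubuniverse B) (hne : B.Nonempty)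
    {X : Type} (env : X → (A.subAlg B h hne).carrier) :
    ∀ t : Term S X,
      Subtype.val (t.eval (A.subAlg B h hne) env) = t.eval A fun x => Subtype.val (env x)
  | .var x => rfl
  | .app ω ts => by
    simp only [Term.eval]
    exact congrArg _ (funext fun i => eval_sub A B h hne env (ts i))

theorem eval_quot (A : Alg S) (θ : Congruence A) {X : Type} (env : X → A.carrier) :
    ∀ t : Term S X,
      t.eval (A.quot θ) (fun x => Quotient.mk θ.setoid (env x))
        = Quotient.mk θ.setoid (t.eval A env)
  | .var x => rfl
  | .app ω ts => by
    show Quotient.mk θ.setoid (A.op ω fun i => Quotient.out _) = _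
    apply Quotient.sound
    apply θ.compat
    intro i
    have h1 : Quotient.mk θ.setoid
        ((Term.eval (A.quot θ) (fun x => Quotient.mk θ.setoid (env x)) (ts i)).out)
        = Quotient.mk θ.setoid ((ts i).eval A env) := by
      exact (Quotient.out_eq _).trans (eval_quot A θ env (ts i))
    exact Quotient.exact h1

def Term.bound : Term S ℕ → ℕ
  | .var n => n + 1
  | .app _ ts => Finset.univ.sup fun i => (ts i).bound

theorem eval_congr_bound (A : Alg S) (e1 e2 : ℕ → A.carrier) :
    ∀ t : Term S ℕ, (∀ n < t.bound, e1 n = e2 n) → t.eval A e1 = t.eval A e2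
  | .var n, h => h n (Nat.lt_succ_self n)
  | .app ω ts, h => by
    simp only [Term.eval]
    refine congrArg _ (funext fun i => eval_congr_bound A e1 e2 (ts i) fun n hn => h n ?_)
    show n < Finset.univ.sup fun i => (ts i).bound
    exact lt_of_lt_of_le hn (Finset.le_sup (f := fun i => (ts i).bound) (Finset.mem_univ i))

end Aux
section Aux2

variable {S : Signature}

/-- The definable candidate congruence relation. -/
def RR (f g : Term S (Fin 2)) (A : Alg S) (x y : A.carrier) : Prop :=
  f.eval A (e2 x y) = x ∧ g.eval A (e2 x y) = y

/-- A "comb" term over variables `x_j, x_{j+1}, …, x_{j+K}`, whose node at level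
`j'` is labelled `f` if `j' = i` and `g` otherwise. -/
def chain (f g : Term S (Fin 2)) : ℕ → ℕ → ℕ → Term S ℕ
  | 0, j, _ => .var j
  | K + 1, j, i => ap2 (if j = i then f else g) (.var j) (chain f g K (j + 1) i)

theorem chain_eval_W {f g : Term S (Fin 2)} {B : Alg S}
    (hfgB : ∀ env : Fin 2 → B.carrier, f.eval B env = g.eval B env) (ε : ℕ → B.carrier) :
    ∀ K j i i', (chain f g K j i).eval B ε = (chain f g K j i').eval B ε := by
  intro K
  induction K with
  | zero => intro j i i'; rfl
  | succ K ih =>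
    intro j i i'
    show (ap2 _ _ _).eval B ε = (ap2 _ _ _).eval B ε
    rw [eval_ap2, eval_ap2, ih (j + 1) i i']
    split_ifs with h1 h2 h3
    · rfl
    · exact hfgB _
    · exact (hfgB _).symm
    · rfl

theorem chain_eval_R {f g : Term S (Fin 2)} {A : Alg S} (e : ℕ → A.carrier)
    (hR : ∀ s t, RR f g A (e s) (e t)) :
    ∀ K j i, (chain f g K j i).eval A e = if j ≤ i ∧ i < j + K then e i else e (j + K) := by
  intro K
  induction K with
  | zero =>
    intro j i
    rw [if_neg (by omega)]
    rfl
  | succ K ih =>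
    intro j i
    show (ap2 _ _ _).eval A e = _
    rw [eval_ap2, ih (j + 1) i]
    by_cases hji : j = i
    · subst hji
      rw [if_pos (by omega : j ≤ j ∧ j < j + (K + 1)), if_neg (by omega : ¬(j + 1 ≤ j ∧ j < j + 1 + K)), if_pos rfl]
      exact (hR j (j + 1 + K)).1
    · rw [if_neg hji]
      by_cases hc : j + 1 ≤ i ∧ i < j + 1 + K
      · rw [if_pos hc, if_pos (by omega : j ≤ i ∧ i < j + (K + 1))]
        exact (hR j i).2
      · rw [if_neg hc, if_neg (by omega : ¬(j ≤ i ∧ i < j + (K + 1)))]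
        have h3 : j + 1 + K = j + (K + 1) := by omega
        rw [← h3]
        exact (hR j (j + 1 + K)).2

end Aux2
section Aux3

variable {S : Signature} {U V W : Set (Ident S)} {f g : Term S (Fin 2)}

theorem rel_out {M : Alg S} (θ : Congruence M) (a : M.carrier) :
    θ.rel ((Quotient.mk θ.setoid a).out) a := by
  have h : Quotient.mk θ.setoid ((Quotient.mk θ.setoid a).out) = Quotient.mk θ.setoid a :=
    Quotient.out_eq _
  exact Quotient.exact h

/-- In a member of the Mal'tsev product (with `W` idempotent), every class of the
witnessing congruence is a subuniverse. -/
theorem class_subuniv (hWidem : ∀ A : Alg S, A.Models W → ∀ a : A.carrier, A.IsIdem a)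
    (M : Alg S) (θ : Congruence M) (hWq : (M.quot θ).Models W) (a : M.carrier) :
    M.IsSubuniverse {b | θ.rel a b} := by
  intro ω b hb
  have h1 : θ.rel (M.op ω b) (M.op ω fun _ => a) := θ.compat ω _ _ fun i => θ.iseqv.symm (hb i)
  have hidem : (M.quot θ).op ω (fun _ => Quotient.mk θ.setoid a) = Quotient.mk θ.setoid a :=
    hWidem (M.quot θ) hWq (Quotient.mk θ.setoid a) ω
  have h2 : θ.rel (M.op ω fun _ => (Quotient.mk θ.setoid a).out) a := Quotient.exact hidem
  have h3 : θ.rel (M.op ω fun _ => a) (M.op ω fun _ => (Quotient.mk θ.setoid a).out) :=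
    θ.compat ω _ _ fun _ => θ.iseqv.symm (rel_out θ a)
  exact θ.iseqv.symm (θ.iseqv.trans h1 (θ.iseqv.trans h3 h2))

/-- In a member, `f` and `g` act as the projections on each congruence class. -/
theorem rel_proj (hf : Conseq V f (Term.var 0)) (hg : Conseq V g (Term.var 1))
    (hWidem : ∀ A : Alg S, A.Models W → ∀ a : A.carrier, A.IsIdem a)
    (M : Alg S) (θ : Congruence M) (hWq : (M.quot θ).Models W)
    (hVc : ∀ a : M.carrier, ∀ h : M.IsSubuniverse {b | θ.rel a b},
      (M.subAlg {b | θ.rel a b} h ⟨a, θ.iseqv.refl a⟩).Models V)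
    {x y : M.carrier} (hxy : θ.rel x y) :
    f.eval M (e2 x y) = x ∧ g.eval M (e2 x y) = y := by
  have hC := class_subuniv hWidem M θ hWq x
  have hMV := hVc x hC
  let env : Fin 2 → (M.subAlg {b | θ.rel x b} hC ⟨x, θ.iseqv.refl x⟩).carrier :=
    e2 ⟨x, θ.iseqv.refl x⟩ ⟨y, hxy⟩
  have henv : (fun i => Subtype.val (env i)) = e2 x y := by
    funext i
    by_cases hi : i = 0 <;> simp [env, e2, hi]
  constructor
  · have h1 := congrArg Subtype.val (hf _ hMV env)
    have h2 := (eval_sub M _ hC _ env f).symm.trans h1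
    rw [henv] at h2
    exact h2
  · have h1 := congrArg Subtype.val (hg _ hMV env)
    have h2 := (eval_sub M _ hC _ env g).symm.trans h1
    rw [henv] at h2
    exact h2

/-- The key identities `f(p,q) ≈ p`, `g(p,q) ≈ q` hold in every member of the
relative Mal'tsev product, whenever `W ⊨ p ≈ q`. -/
theorem keyW_mem (hf : Conseq V f (Term.var 0)) (hg : Conseq V g (Term.var 1))
    (hWidem : ∀ A : Alg S, A.Models W → ∀ a : A.carrier, A.IsIdem a)
    (p q : Term S ℕ) (hpq : ∀ B : Alg S, B.Models W → B.sat p q)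
    (M : Alg S) (hM : InMaltsevRel U V W M) :
    M.sat (ap2 f p q) p ∧ M.sat (ap2 g p q) q := by
  obtain ⟨hU, θ, hWq, hVc⟩ := hM
  have hrel : ∀ ε : ℕ → M.carrier, θ.rel (p.eval M ε) (q.eval M ε) := by
    intro ε
    apply Quotient.exact (s := θ.setoid)
    rw [← eval_quot, ← eval_quot]
    exact hpq (M.quot θ) hWq _
  constructor
  · intro ε
    rw [eval_ap2]
    exact (rel_proj hf hg hWidem M θ hWq hVc (hrel ε)).1
  · intro ε
    rw [eval_ap2]
    exact (rel_proj hf hg hWidem M θ hWq hVc (hrel ε)).2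

/-- The substituted `V`-identities (through combs) hold in every member. -/
theorem keyV_mem (hf : Conseq V f (Term.var 0)) (hg : Conseq V g (Term.var 1))
    (hfg : Conseq W f g)
    (hWidem : ∀ A : Alg S, A.Models W → ∀ a : A.carrier, A.IsIdem a)
    (u v : Term S ℕ) (huv : (u, v) ∈ V) (K : ℕ)
    (M : Alg S) (hM : InMaltsevRel U V W M) :
    M.sat (u.subst fun n => chain f g K 0 n) (v.subst fun n => chain f g K 0 n) := by
  obtain ⟨hU, θ, hWq, hVc⟩ := hM
  intro ε
  have hrel : ∀ n, θ.rel ((chain f g K 0 0).eval M ε) ((chain f g K 0 n).eval M ε) := by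
    intro n
    apply Quotient.exact (s := θ.setoid)
    rw [← eval_quot, ← eval_quot]
    exact chain_eval_W (fun env => hfg (M.quot θ) hWq env) _ K 0 0 n
  have hC := class_subuniv hWidem M θ hWq ((chain f g K 0 0).eval M ε)
  have hMV := hVc _ hC
  have hsat := congrArg Subtype.val (hMV (u, v) huv (fun n => ⟨(chain f g K 0 n).eval M ε, hrel n⟩))
  replace hsat := (eval_sub M _ hC _ _ u).symm.trans (hsat.trans (eval_sub M _ hC _ _ v))
  rw [Term.eval_subst, Term.eval_subst]
  exact hsat

end Aux3
/-- Let `U` be any variety, and `V`, `W` subvarieties of `U`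
with `W` idempotent, such that there are binary terms `f(x,y)`, `g(x,y)` with
`V ⊨ f(x,y) = x`, `V ⊨ g(x,y) = y` and `W ⊨ f(x,y) = g(x,y)`. Then the relative
Mal'tsev product `V ∘_U W` is a variety. -/
theorem stmt_12 (S : Signature) (h0 : ∀ ω : S.symbols, 0 < S.arity ω)
    (U V W : Set (Ident S))
    (hVU : ∀ A : Alg S, A.Models V → A.Models U)
    (hWU : ∀ A : Alg S, A.Models W → A.Models U)
    (hWidem : ∀ A : Alg S, A.Models W → ∀ a : A.carrier, A.IsIdem a)
    (f g : Term S (Fin 2))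
    (hf : Conseq V f (Term.var 0))
    (hg : Conseq V g (Term.var 1))
    (hfg : Conseq W f g) :
    IsVarietyClass (InMaltsevRel U V W) := by
  classical
  refine ⟨{e : Ident S | ∀ M : Alg S, InMaltsevRel U V W M → M.sat e.1 e.2}, fun A => ⟨?_, ?_⟩⟩
  · intro hA e he
    exact he A hA
  · intro hAE
    have hAU : A.Models U := fun e he => hAE e (fun M hM => hM.1 e he)
    -- Every pair of terms equal in `W` gives rise to an `RR`-related pair of values in `A`.
    have Rfrom : ∀ p q : Term S ℕ, (∀ B : Alg S, B.Models W → B.sat p q) →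
        ∀ e : ℕ → A.carrier, RR f g A (p.eval A e) (q.eval A e) := by
      intro p q hpq e
      constructor
      · have h1 := hAE (ap2 f p q, p) (fun M hM => (keyW_mem hf hg hWidem p q hpq M hM).1) e
        rwa [eval_ap2] at h1
      · have h1 := hAE (ap2 g p q, q) (fun M hM => (keyW_mem hf hg hWidem p q hpq M hM).2) e
        rwa [eval_ap2] at h1
    have Rrefl : ∀ x, RR f g A x x := fun x =>
      Rfrom (.var 0) (.var 0) (fun _ _ _ => rfl) (fun _ => x)
    have Rsymm : ∀ {x y}, RR f g A x y → RR f g A y x := by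
      intro x y h
      have hpq : ∀ B : Alg S, B.Models W →
          B.sat (ap2 g (.var 0) (.var 1)) (ap2 f (.var 0) (.var 1)) := by
        intro B hB ε
        rw [eval_ap2, eval_ap2]
        exact (hfg B hB _).symm
      have h' := Rfrom _ _ hpq (fun n => if n = 0 then x else y)
      have hX : (ap2 g (.var 0) (.var 1) : Term S ℕ).eval A (fun n => if n = 0 then x else y)
          = y := by rw [eval_ap2]; exact h.2
      have hY : (ap2 f (.var 0) (.var 1) : Term S ℕ).eval A (fun n => if n = 0 then x else y)
          = x := by rw [eval_ap2]; exact h.1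
      rw [hX, hY] at h'
      exact h'
    have Rtrans : ∀ {x y z}, RR f g A x y → RR f g A y z → RR f g A x z := by
      intro x y z hxy hyz
      have hpq : ∀ B : Alg S, B.Models W →
          B.sat (ap2 f (ap2 f (.var 0) (.var 1)) (ap2 f (.var 1) (.var 2)))
                (ap2 g (ap2 g (.var 0) (.var 1)) (ap2 g (.var 1) (.var 2))) := by
        intro B hB ε
        have h1 : ∀ env, f.eval B env = g.eval B env := hfg B hB
        simp only [eval_ap2, h1]
      have e3 : ℕ → A.carrier := fun n => x
      have h' := Rfrom _ _ hpq (fun n => if n = 0 then x else if n = 1 then y else z)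
      have hX : (ap2 f (ap2 f (.var 0) (.var 1)) (ap2 f (.var 1) (.var 2)) : Term S ℕ).eval A
          (fun n => if n = 0 then x else if n = 1 then y else z) = x := by
        rw [eval_ap2, eval_ap2, eval_ap2]
        show f.eval A (e2 (f.eval A (e2 x y)) (f.eval A (e2 y z))) = x
        rw [hxy.1, hyz.1]
        exact hxy.1
      have hY : (ap2 g (ap2 g (.var 0) (.var 1)) (ap2 g (.var 1) (.var 2)) : Term S ℕ).eval A
          (fun n => if n = 0 then x else if n = 1 then y else z) = z := by
        rw [eval_ap2, eval_ap2, eval_ap2]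
        show g.eval A (e2 (g.eval A (e2 x y)) (g.eval A (e2 y z))) = z
        rw [hxy.2, hyz.2]
        exact hyz.2
      rw [hX, hY] at h'
      exact h'
    have Rcompat : ∀ ω (a b : Fin (S.arity ω) → A.carrier),
        (∀ i, RR f g A (a i) (b i)) → RR f g A (A.op ω a) (A.op ω b) := by
      intro ω a b hab
      have x0 : A.carrier := A.nonempty.some
      set aa : ℕ → A.carrier := fun m => if h : m < S.arity ω then a ⟨m, h⟩ else x0 with haa
      set bb : ℕ → A.carrier := fun m => if h : m < S.arity ω then b ⟨m, h⟩ else x0 with hbb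
      set e : ℕ → A.carrier := fun n => if n % 2 = 0 then aa (n / 2) else bb (n / 2) with he
      have he1 : ∀ i : Fin (S.arity ω), e (2 * i.val) = a i := by
        intro i
        show (if (2 * i.val) % 2 = 0 then aa ((2 * i.val) / 2) else bb ((2 * i.val) / 2)) = a i
        rw [if_pos (by omega), show (2 * i.val) / 2 = i.val by omega]
        show (if h : i.val < S.arity ω then a ⟨i.val, h⟩ else x0) = a i
        rw [dif_pos i.isLt]
      have he2 : ∀ i : Fin (S.arity ω), e (2 * i.val + 1) = b i := by
        intro i
        show (if (2 * i.val + 1) % 2 = 0 then aa ((2 * i.val + 1) / 2) else bb ((2 * i.val + 1) / 2)) = b i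
        rw [if_neg (by omega), show (2 * i.val + 1) / 2 = i.val by omega]
        show (if h : i.val < S.arity ω then b ⟨i.val, h⟩ else x0) = b i
        rw [dif_pos i.isLt]
      have hpq : ∀ B : Alg S, B.Models W →
          B.sat (Term.app ω fun i => ap2 f (.var (2 * i.val)) (.var (2 * i.val + 1)))
                (Term.app ω fun i => ap2 g (.var (2 * i.val)) (.var (2 * i.val + 1))) := by
        intro B hB ε
        have h1 : ∀ env, f.eval B env = g.eval B env := hfg B hB
        show B.op ω _ = B.op ω _
        refine congrArg _ (funext fun i => ?_)
        rw [eval_ap2, eval_ap2, h1]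
      have h' := Rfrom _ _ hpq e
      have hX : (Term.app ω fun i => ap2 f (.var (2 * i.val)) (.var (2 * i.val + 1)) :
          Term S ℕ).eval A e = A.op ω a := by
        show A.op ω _ = A.op ω a
        refine congrArg _ (funext fun i => ?_)
        rw [eval_ap2]
        show f.eval A (e2 (e (2 * i.val)) (e (2 * i.val + 1))) = a i
        rw [he1 i, he2 i]
        exact (hab i).1
      have hY : (Term.app ω fun i => ap2 g (.var (2 * i.val)) (.var (2 * i.val + 1)) :
          Term S ℕ).eval A e = A.op ω b := by
        show A.op ω _ = A.op ω b
        refine congrArg _ (funext fun i => ?_)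
        rw [eval_ap2]
        show g.eval A (e2 (e (2 * i.val)) (e (2 * i.val + 1))) = b i
        rw [he1 i, he2 i]
        exact (hab i).2
      rw [hX, hY] at h'
      exact h'
    let θA : Congruence A :=
      ⟨RR f g A, ⟨Rrefl, fun h => Rsymm h, fun h1 h2 => Rtrans h1 h2⟩, Rcompat⟩
    refine ⟨hAU, θA, ?_, ?_⟩
    · -- the quotient models W
      intro ev hev envq
      have henvq : envq = fun n => Quotient.mk θA.setoid ((envq n).out) :=
        funext fun n => (Quotient.out_eq _).symm
      rw [henvq, eval_quot, eval_quot]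
      exact Quotient.sound (Rfrom ev.1 ev.2 (fun B hB => hB ev hev) (fun n => (envq n).out))
    · -- the classes model V
      intro a hsub ev hev env
      apply Subtype.ext
      refine (eval_sub A _ hsub _ env ev.1).trans (Eq.trans ?_ (eval_sub A _ hsub _ env ev.2).symm)
      have hRe : ∀ s t, RR f g A ((env s).val) ((env t).val) := by
        intro s t
        exact Rtrans (Rsymm (env s).2) (env t).2
      have hK1 : ev.1.bound ≤ max ev.1.bound ev.2.bound := le_max_left _ _
      have hK2 : ev.2.bound ≤ max ev.1.bound ev.2.bound := le_max_right _ _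
      set K := max ev.1.bound ev.2.bound with hKdef
      have hid := hAE (ev.1.subst (fun n => chain f g K 0 n),
          ev.2.subst (fun n => chain f g K 0 n))
        (fun M hM => keyV_mem hf hg hfg hWidem ev.1 ev.2 hev K M hM)
        (fun n => (env n).val)
      rw [Term.eval_subst, Term.eval_subst] at hid
      have hcv : ∀ n, (chain f g K 0 n).eval A (fun m => (env m).val)
          = if 0 ≤ n ∧ n < 0 + K then (env n).val else (env (0 + K)).val :=
        fun n => chain_eval_R _ hRe K 0 n
      calc ev.1.eval A (fun m => (env m).val)
          = ev.1.eval A (fun n => (chain f g K 0 n).eval A (fun m => (env m).val)) := by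
            apply eval_congr_bound
            intro n hn
            rw [hcv n, if_pos (by omega : 0 ≤ n ∧ n < 0 + K)]
        _ = ev.2.eval A (fun n => (chain f g K 0 n).eval A (fun m => (env m).val)) := hid
        _ = ev.2.eval A (fun m => (env m).val) := by
            apply Eq.symm
            apply eval_congr_bound
            intro n hn
            rw [hcv n, if_pos (by omega : 0 ≤ n ∧ n < 0 + K)]
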